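/- There exists a function ζ ∈ C^∞(ℝⁿ₊ × ℝⁿ, ℝ), where ℝⁿ₊ := {ξ ∈ ℝⁿ : eₙ·ξ > 0}, such that: (i) ζ(ξ, t z) = t² ζ(ξ, z) for all ξ ∈ ℝⁿ₊, z ∈ ℝⁿ, t ∈ ℝ; (ii) ζ(ξ, z) > 0 for all ξ ∈ ℝⁿ₊ and z ∈ ℝⁿ \ {0}; (iii) ξ·D_z ζ(ξ, z) = (eₙ·ξ)(eₙ·z) for all ξ ∈ ℝⁿ₊ and z ∈ ℝⁿ. -/

import Mathlib

open Set Metric Filter MeasureTheory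
open scoped Topology NNReal InnerProductSpace

noncomputable section

abbrev En (n : ℕ) := EuclideanSpace ℝ (Fin n)

/-- The last coordinate unit vector `eₙ = (0,…,0,1)` in `ℝ^{n+1}`. -/
def eLast (n : ℕ) : En (n + 1) := EuclideanSpace.single (Fin.last n) (1 : ℝ)

variable {n : ℕ}

/-- The superdifferential `D⁺_V φ(x)` of `φ` at `x` relative to the set `V`. -/
def supDiff (V : Set (En n)) (φ : En n → ℝ) (x : En n) : Set (En n) :=
  {p | ∀ ε > 0, ∃ δ > 0, ∀ y ∈ V, ‖y - x‖ < δ →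
      φ y ≤ φ x + ⟪p, y - x⟫_ℝ + ε * ‖y - x‖}

private lemma zeta_grad (ξ z : En (n+1)) :
    HasGradientAt (fun y : En (n+1) => ⟪y, y⟫_ℝ - ⟪ξ, y⟫_ℝ^2/⟪ξ, ξ⟫_ℝ + ⟪eLast n, y⟫_ℝ^2/2)
      ((2:ℝ) • z - (2*⟪ξ, z⟫_ℝ/⟪ξ, ξ⟫_ℝ) • ξ + ⟪eLast n, z⟫_ℝ • eLast n) z := by
  rw [hasGradientAt_iff_hasFDerivAt]
  simp only [pow_two, div_eq_mul_inv]
  have h1 : HasFDerivAt (fun y : En (n+1) => ⟪y, y⟫_ℝ)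
      ((fderivInnerCLM ℝ (z, z)).comp
        ((ContinuousLinearMap.id ℝ _).prod (ContinuousLinearMap.id ℝ _))) z :=
    (hasFDerivAt_id z).inner ℝ (hasFDerivAt_id z)
  have h2 : HasFDerivAt (fun y : En (n+1) => ⟪ξ, y⟫_ℝ) (innerSL ℝ ξ) z := (innerSL ℝ ξ).hasFDerivAt
  have h3 : HasFDerivAt (fun y : En (n+1) => ⟪eLast n, y⟫_ℝ) (innerSL ℝ (eLast n)) z :=
    (innerSL ℝ (eLast n)).hasFDerivAt
  have h := ((h1.sub (((h2.mul h2).mul_const (⟪ξ, ξ⟫_ℝ)⁻¹))).add ((h3.mul h3).mul_const (2:ℝ)⁻¹))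
  refine HasFDerivAt.congr_fderiv h ?_
  refine ContinuousLinearMap.ext fun (v : En (n+1)) => ?_
  simp [fderivInnerCLM_apply, real_inner_smul_left, inner_add_left, inner_sub_left,
    real_inner_comm z v]
  ring

theorem exists_zeta
    (n : ℕ) :
    ∃ ζ : En (n + 1) → En (n + 1) → ℝ,
      ContDiffOn ℝ (⊤ : ℕ∞) (fun q : En (n + 1) × En (n + 1) => ζ q.1 q.2)
        ({ξ : En (n + 1) | 0 < ⟪eLast n, ξ⟫_ℝ} ×ˢ univ) ∧
      (∀ ξ : En (n + 1), 0 < ⟪eLast n, ξ⟫_ℝ → ∀ z : En (n + 1), ∀ t : ℝ,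
        ζ ξ (t • z) = t ^ 2 * ζ ξ z) ∧
      (∀ ξ : En (n + 1), 0 < ⟪eLast n, ξ⟫_ℝ → ∀ z : En (n + 1), z ≠ 0 → 0 < ζ ξ z) ∧
      (∀ ξ : En (n + 1), 0 < ⟪eLast n, ξ⟫_ℝ → ∀ z : En (n + 1),
        ⟪ξ, gradient (fun y => ζ ξ y) z⟫_ℝ = ⟪eLast n, ξ⟫_ℝ * ⟪eLast n, z⟫_ℝ) := by
  refine ⟨fun ξ z => ⟪z, z⟫_ℝ - ⟪ξ, z⟫_ℝ^2/⟪ξ, ξ⟫_ℝ + ⟪eLast n, z⟫_ℝ^2/2, ?_, ?_, ?_, ?_⟩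
  · -- smoothness
    have hA : ContDiff ℝ (⊤ : ℕ∞) (fun q : En (n+1) × En (n+1) => ⟪q.2, q.2⟫_ℝ) :=
      contDiff_snd.inner ℝ contDiff_snd
    have hB : ContDiff ℝ (⊤ : ℕ∞) (fun q : En (n+1) × En (n+1) => ⟪q.1, q.2⟫_ℝ^2) :=
      (contDiff_fst.inner ℝ contDiff_snd).pow 2
    have hC : ContDiff ℝ (⊤ : ℕ∞) (fun q : En (n+1) × En (n+1) => ⟪q.1, q.1⟫_ℝ) :=
      contDiff_fst.inner ℝ contDiff_fst
    have hD : ContDiff ℝ (⊤ : ℕ∞) (fun q : En (n+1) × En (n+1) => ⟪eLast n, q.2⟫_ℝ^2/2) :=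
      ((contDiff_const.inner ℝ contDiff_snd).pow 2).div_const 2
    refine ((hA.contDiffOn.sub (hB.contDiffOn.div hC.contDiffOn ?_)).add hD.contDiffOn)
    rintro ⟨ξ, z⟩ ⟨hξ, -⟩
    simp only [mem_setOf_eq] at hξ
    have hne : ξ ≠ 0 := by rintro rfl; simp at hξ
    rw [real_inner_self_eq_norm_sq]
    exact pow_ne_zero 2 (norm_ne_zero_iff.2 hne)
  · -- homogeneity
    intro ξ _ z t
    simp only [real_inner_smul_right, real_inner_smul_left]
    ring
  · -- positivity
    intro ξ hξ z hz
    have hξ0 : ξ ≠ 0 := by rintro rfl; simp at hξ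
    have hξξ : (0:ℝ) < ⟪ξ, ξ⟫_ℝ := by
      rw [real_inner_self_eq_norm_sq]
      have : (0:ℝ) < ‖ξ‖ := norm_pos_iff.2 hξ0
      positivity
    have hCS : ⟪ξ, z⟫_ℝ^2/⟪ξ, ξ⟫_ℝ ≤ ⟪z, z⟫_ℝ := by
      rw [div_le_iff₀ hξξ, pow_two]
      calc ⟪ξ, z⟫_ℝ * ⟪ξ, z⟫_ℝ ≤ ⟪ξ, ξ⟫_ℝ * ⟪z, z⟫_ℝ := real_inner_mul_inner_self_le ξ z
        _ = ⟪z, z⟫_ℝ * ⟪ξ, ξ⟫_ℝ := by ring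
    rcases eq_or_ne ⟪eLast n, z⟫_ℝ 0 with he | he
    · -- strict Cauchy-Schwarz
      have hlt : ⟪ξ, z⟫_ℝ < ‖ξ‖ * ‖z‖ := by
        rw [inner_lt_norm_mul_iff_real]
        intro h
        have := congrArg (fun w => ⟪eLast n, w⟫_ℝ) h
        simp only [real_inner_smul_right, he, mul_zero] at this
        have hz' : (0:ℝ) < ‖z‖ := norm_pos_iff.2 hz
        nlinarith
      have hgt : -(‖ξ‖ * ‖z‖) < ⟪ξ, z⟫_ℝ := by
        have : ⟪ξ, -z⟫_ℝ < ‖ξ‖ * ‖-z‖ := by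
          rw [inner_lt_norm_mul_iff_real]
          intro h
          have := congrArg (fun w => ⟪eLast n, w⟫_ℝ) h
          simp only [real_inner_smul_right, inner_neg_right, he, neg_zero, mul_zero] at this
          have hz' : (0:ℝ) < ‖-z‖ := by simpa using norm_pos_iff.2 hz
          nlinarith
        rw [inner_neg_right, norm_neg] at this
        linarith
      have hsq : ⟪ξ, z⟫_ℝ^2 < (‖ξ‖ * ‖z‖)^2 := sq_lt_sq' hgt hlt
      have hstrict : ⟪ξ, z⟫_ℝ^2/⟪ξ, ξ⟫_ℝ < ⟪z, z⟫_ℝ := by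
        rw [div_lt_iff₀ hξξ, real_inner_self_eq_norm_sq, real_inner_self_eq_norm_sq]
        nlinarith
      have : (0:ℝ) ≤ ⟪eLast n, z⟫_ℝ^2/2 := by positivity
      linarith
    · have : (0:ℝ) < ⟪eLast n, z⟫_ℝ^2/2 := by positivity
      linarith
  · -- gradient identity
    intro ξ hξ z
    have hξ0 : ξ ≠ 0 := by rintro rfl; simp at hξ
    have hξξ : (0:ℝ) < ⟪ξ, ξ⟫_ℝ := by
      rw [real_inner_self_eq_norm_sq]
      have : (0:ℝ) < ‖ξ‖ := norm_pos_iff.2 hξ0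
      positivity
    rw [(zeta_grad ξ z).gradient]
    rw [inner_add_right, inner_sub_right, real_inner_smul_right, real_inner_smul_right,
      real_inner_smul_right]
    rw [real_inner_comm ξ (eLast n), div_mul_cancel₀ _ (ne_of_gt hξξ)]
    ring
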